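/- arXiv:cs/0207050 — 4 statements merged into one kernel-verified Lean document; each statement's English description precedes it below -/
import Mathlib

section
/- Chaotic iteration confluence: the limit ⋂_{i∈ℕ} d^i of every chaotic iteration of a finite set F of monotonic operators from d ⊆ D equals the downward closure CL↓(d,F). (A chaotic iteration is one where every f ∈ F appears infinitely often in the sequence f¹, f², ….) -/
def CL {α : Type*} (d : Set α) (F : Set (Set α → Set α)) : Set α :=
  ⋃₀ {e | e ⊆ d ∧ ∀ f ∈ F, e ⊆ f e}

theorem chaotic_iteration_confluence {α : Type*} [Finite α]
    (d : Set α) (F : Set (Set α → Set α)) (hFfin : F.Finite)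
    (hF : ∀ f ∈ F, Monotone f)
    (fs : ℕ → (Set α → Set α)) (hfs : ∀ i, 1 ≤ i → fs i ∈ F)
    (hchaotic : ∀ f ∈ F, {i : ℕ | fs i = f}.Infinite)
    (dseq : ℕ → Set α) (h0 : dseq 0 = d)
    (hstep : ∀ i, dseq (i + 1) = dseq i ∩ fs (i + 1) (dseq i)) :
    ⋂ i, dseq i = CL d F := by
  classical
  have : Fintype α := Fintype.ofFinite α
  have hanti : Antitone dseq := antitone_nat_of_succ_le (fun i => by
    rw [hstep i]; exact Set.inter_subset_left)
  set L := ⋂ i, dseq i with hL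
  have hLsub : ∀ i, L ⊆ dseq i := fun i => Set.iInter_subset _ i
  have hw : ∀ x : α, x ∉ L → ∃ i, x ∉ dseq i := by
    intro x hx
    by_contra h
    push_neg at h
    exact hx (Set.mem_iInter.2 h)
  set g : α → ℕ := fun x => if h : x ∈ L then 0 else (hw x h).choose with hg
  set N : ℕ := Finset.univ.sup g with hN
  have hstab : ∀ i, N ≤ i → dseq i = L := by
    intro i hi
    refine subset_antisymm ?_ (hLsub i)
    intro x hx
    by_contra hxL
    have hxg : x ∉ dseq (g x) := by
      have := (hw x hxL).choose_spec
      simpa [hg, hxL] using this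
    have hgN : g x ≤ N := Finset.le_sup (Finset.mem_univ x)
    exact hxg (hanti (hgN.trans hi) hx)
  apply subset_antisymm
  · intro x hx
    refine ⟨L, ⟨?_, ?_⟩, hx⟩
    · rw [← h0]; exact hLsub 0
    · intro f hf
      obtain ⟨i, hif, hiN⟩ := ((hchaotic f hf).exists_gt N)
      simp only [Set.mem_setOf_eq] at hif
      obtain ⟨j, rfl⟩ : ∃ j, i = j + 1 := ⟨i - 1, by omega⟩
      have h1 : dseq (j + 1) = L := hstab _ (by omega)
      have h2 : dseq j = L := hstab _ (by omega)
      have := hstep j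
      rw [h1, h2, hif] at this
      exact this.subset.trans Set.inter_subset_right
  · intro x hx
    obtain ⟨e, ⟨hed, hef⟩, hxe⟩ := hx
    refine Set.mem_iInter.2 fun i => ?_
    suffices he : e ⊆ dseq i from he hxe
    induction i with
    | zero => rw [h0]; exact hed
    | succ j ih =>
      rw [hstep j]
      have hfm : fs (j + 1) ∈ F := hfs (j + 1) (by omega)
      exact Set.subset_inter ih ((hef _ hfm).trans ((hF _ hfm) ih))
end

section
/- If every operator in R is a constant function, then CL↓(d, L ∪ R) = CL↓(CL↓(d,R), L), i.e., the constant operators may be applied first. -/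
theorem CL_constants_first {α : Type*} [Finite α]
    (d : Set α) (L R : Set (Set α → Set α))
    (hL : ∀ f ∈ L, Monotone f)
    (hR : ∀ r ∈ R, ∀ e e' : Set α, r e = r e') :
    CL d (L ∪ R) = CL (CL d R) L := by
  ext x
  simp only [CL, Set.mem_sUnion, Set.mem_setOf_eq]
  constructor
  · rintro ⟨e, ⟨hed, hf⟩, hx⟩
    refine ⟨e, ⟨?_, fun f hfL => hf f (Or.inl hfL)⟩, hx⟩
    intro y hy
    exact ⟨e, ⟨hed, fun r hr => hf r (Or.inr hr)⟩, hy⟩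
  · rintro ⟨e, ⟨hecl, hf⟩, hx⟩
    have hed : e ⊆ d := fun y hy => by
      obtain ⟨e', ⟨he'd, _⟩, hy'⟩ := hecl hy
      exact he'd hy'
    refine ⟨e, ⟨hed, ?_⟩, hx⟩
    rintro f (hfL | hfR)
    · exact hf f hfL
    · intro y hy
      obtain ⟨e', ⟨_, hre'⟩, hy'⟩ := hecl hy
      have := hre' f hfR hy'
      rwa [hR f hfR e' e] at this
end

section
/- If t ⊆ d is a solution of the CSP, {d_i | 1 ≤ i ≤ n} is a partition of d on x, and every operator in L is a local consistency operator that is correct for the CSP (i.e., every solution s with s ⊆ e satisfies s ⊆ f(e) for all f ∈ L and e ⊆ 𝔻), then t ⊆ ⋃_{1≤i≤n} CL↓(d_i, L). -/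
def restrict {V E : Type*} (d : Set (V × E)) (W : Set V) : Set (V × E) :=
  {p ∈ d | p.1 ∈ W}

structure CSP (V E : Type*) where
  C : Type*
  var : C → Set V
  Dx : V → Set E
  Dx_finite : ∀ x, (Dx x).Finite
  Dx_nonempty : ∀ x, (Dx x).Nonempty
  T : C → Set (Set (V × E))

def CSP.Dom {V E : Type*} (P : CSP V E) : Set (V × E) :=
  {p | p.2 ∈ P.Dx p.1}

def CSP.IsTuple {V E : Type*} (P : CSP V E) (t : Set (V × E)) (W : Set V) : Prop :=
  t ⊆ restrict P.Dom W ∧ ∀ x ∈ W, ∃! e : E, (x, e) ∈ t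

def CSP.IsSolution {V E : Type*} (P : CSP V E) (t : Set (V × E)) : Prop :=
  P.IsTuple t Set.univ ∧ ∀ c, restrict t (P.var c) ∈ P.T c

def IsPartitionOn {V E : Type*} (d : Set (V × E)) (x : V) {n : ℕ}
    (ds : Fin n → Set (V × E)) : Prop :=
  (∀ i, restrict d {x}ᶜ ⊆ restrict (ds i) {x}ᶜ) ∧
  restrict d {x} ⊆ ⋃ i, restrict (ds i) {x} ∧
  ∀ i j, i ≠ j → restrict (ds i) {x} ∩ restrict (ds j) {x} = ∅

theorem partition_CL_preserves_solutions {V E : Type*} [Finite V] [Finite E]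
    (P : CSP V E) (t d : Set (V × E)) (x : V) {n : ℕ}
    (ds : Fin n → Set (V × E))
    (L : Set (Set (V × E) → Set (V × E)))
    (hL : ∀ f ∈ L, Monotone f)
    (hcorrect : ∀ f ∈ L, ∀ s : Set (V × E), P.IsSolution s →
      ∀ e ⊆ P.Dom, s ⊆ e → s ⊆ f e)
    (ht : P.IsSolution t) (htd : t ⊆ d) (hd : d ⊆ P.Dom)
    (hp : IsPartitionOn d x ds) :
    t ⊆ ⋃ i, CL (ds i) L := by
  have ht2 := ht
  obtain ⟨⟨htD, huniq⟩, _⟩ := ht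
  obtain ⟨e, he, heq⟩ := huniq x (Set.mem_univ x)
  have hxe : (x, e) ∈ restrict d {x} := ⟨htd he, rfl⟩
  obtain ⟨_, ⟨i, rfl⟩, hmem⟩ := hp.2.1 hxe
  have htds : t ⊆ ds i := by
    intro p hp'
    by_cases hx : p.1 = x
    · have : p = (x, e) := by
        have := heq p.2 (by rw [← hx] at he ⊢; exact (Prod.mk.eta ▸ hp' : (p.1, p.2) ∈ t))
        obtain ⟨a, b⟩ := p
        simp_all
      rw [this]; exact hmem.1
    · exact (hp.1 i ⟨htd hp', hx⟩).1
  intro p hpt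
  refine Set.mem_iUnion.2 ⟨i, Set.mem_sUnion.2 ⟨t, ⟨htds, ?_⟩, hpt⟩⟩
  intro f hf
  exact hcorrect f hf t ht2 t (fun q hq => hd (htd hq)) subset_rfl
end

section
/- Soundness of explanation rules: if Γ ⊢ h is the root of a proof tree with respect to the rule system R_L ∪ R_R ∪ R_𝔻, then for all e ∈ Γ, h ∉ CL↓(e, L ∪ R). (Forward direction of the explanation theorem.) -/
/-- A judgment `Γ ⊢ h`. -/
abbrev Judgment (α : Type*) := Set (Set α) × α

/-- The rule system `R_L ∪ R_R ∪ R_𝔻` associated with local consistency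
operators `L` and restriction operators `R`. -/
def RuleSystem {α : Type*} (L R : Set (Set α → Set α)) :
    Set (List (Judgment α) × Judgment α) :=
  {rule |
    -- local consistency rules
    (∃ l ∈ L, ∃ (Γ : Set (Set α)) (hs : List α) (h : α),
      rule = (hs.map fun h' => (Γ, h'), (Γ, h)) ∧
      ∀ d : Set α, (∀ h' ∈ hs, h' ∉ d) → h ∉ l d) ∨
    -- restriction rules (facts)
    (∃ r ∈ R, ∃ (d : Set α) (h : α),
      rule = ([], ({d}, h)) ∧ h ∉ r Set.univ ∧ d ⊆ r Set.univ) ∨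
    -- labeling rules
    (∃ (h : α) (Γs : List (Set (Set α))), Γs ≠ [] ∧
      rule = (Γs.map fun Γ => (Γ, h), ({e | ∃ Γ ∈ Γs, e ∈ Γ}, h)))}

/-- Proof trees with respect to a rule system. -/
inductive Derives {α : Type*} (Rules : Set (List (Judgment α) × Judgment α)) :
    Judgment α → Prop
  | step (prems : List (Judgment α)) (concl : Judgment α)
      (hrule : (prems, concl) ∈ Rules)
      (hprems : ∀ j ∈ prems, Derives Rules j) : Derives Rules concl


theorem CL_closed {α : Type*} (e : Set α) (L R : Set (Set α → Set α))
    (hL : ∀ f ∈ L, Monotone f)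
    (hR : ∀ r ∈ R, ∀ e e' : Set α, r e = r e') :
    ∀ f ∈ L ∪ R, CL e (L ∪ R) ⊆ f (CL e (L ∪ R)) := by
  intro f hf x hx
  obtain ⟨s, ⟨hs, hcl⟩, hxs⟩ := hx
  have hsub : s ⊆ CL e (L ∪ R) := fun y hy => ⟨s, ⟨hs, hcl⟩, hy⟩
  rcases hf with hfL | hfR
  · exact hL f hfL hsub (hcl f (Or.inl hfL) hxs)
  · have := hcl f (Or.inr hfR) hxs
    rwa [hR f hfR s _] at this

theorem explanation_soundness {α : Type*} [Finite α]
    (L R : Set (Set α → Set α))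
    (hL : ∀ f ∈ L, Monotone f)
    (hR : ∀ r ∈ R, ∀ e e' : Set α, r e = r e')
    (Γ : Set (Set α)) (h : α)
    (hder : Derives (RuleSystem L R) (Γ, h)) :
    ∀ e ∈ Γ, h ∉ CL e (L ∪ R) := by
  suffices H : ∀ j : Judgment α, Derives (RuleSystem L R) j →
      ∀ e ∈ j.1, j.2 ∉ CL e (L ∪ R) from H (Γ, h) hder
  intro j hj
  induction hj with
  | step prems concl hrule hprems ih =>
    intro e he hmem
    rcases hrule with ⟨l, hl, Γ', hs, h', heq, hprop⟩ |
        ⟨r, hr, d, h', heq, hnotin, hdsub⟩ | ⟨h', Γs, hne, heq⟩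
    · obtain ⟨hp, hc⟩ := Prod.mk.injEq .. ▸ heq
      subst hc
      have hnot : ∀ x ∈ hs, x ∉ CL e (L ∪ R) := by
        intro x hx
        have hmemprem : (Γ', x) ∈ prems := by
          subst hp; exact List.mem_map.2 ⟨x, hx, rfl⟩
        exact ih _ hmemprem e he
      have := hprop _ hnot
      exact this (CL_closed e L R hL hR l (Or.inl hl) hmem)
    · obtain ⟨hp, hc⟩ := Prod.mk.injEq .. ▸ heq
      subst hc
      have : e = d := he
      subst this
      have h1 := CL_closed e L R hL hR r (Or.inr hr) hmem
      rw [hR r hr _ Set.univ] at h1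
      exact hnotin h1
    · obtain ⟨hp, hc⟩ := Prod.mk.injEq .. ▸ heq
      subst hc
      obtain ⟨Γ'', hΓ'', heΓ⟩ := he
      have hmemprem : (Γ'', h') ∈ prems := by
        subst hp; exact List.mem_map.2 ⟨Γ'', hΓ'', rfl⟩
      exact ih _ hmemprem e heΓ hmem
end
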